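/- Let there be n ≥ 1 players. For each k = 1,…,n let A_k be a real m_k×d_k matrix with full row rank, b_k ∈ ℝ^{m_k}, and suppose M_k = {x ∈ Δ^{d_k−1} : A_k x = b_k} is nonempty. Let ℓ_k : ℝ^{d_1}×⋯×ℝ^{d_n} → ℝ be differentiable and convex in its k-th argument. Fix a profile μ = (μ_1,…,μ_n) with each μ_k ∈ M_k having all coordinates strictly positive, and let τ > 0. Define ε_k = ℓ_k(μ) − min_{z ∈ M_k} ℓ_k(z, μ_{−k}), let ∇^{kτ} be the gradient with respect to μ_k of ℓ_k(μ) − τH(μ_k), and let L^τ = Σ_{k=1}^n ‖Π_{A_k} ∇^{kτ}‖₂². Then max_k ε_k ≤ τ log(max_k d_k) + √(2 n L^τ). -/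

import Mathlib

open Matrix

/-- Tangent-space projection matrix `Π_A = I − Aᵀ(AAᵀ)⁻¹A`. -/
noncomputable def projMat {m d : ℕ} (A : Matrix (Fin m) (Fin d) ℝ) :
    Matrix (Fin d) (Fin d) ℝ :=
  1 - Aᵀ * (A * Aᵀ)⁻¹ * A

/-- The gradient of `f : ℝ^d → ℝ` at `x`. -/
noncomputable def grad {d : ℕ} (f : (Fin d → ℝ) → ℝ) (x : Fin d → ℝ) : Fin d → ℝ :=
  fun k => fderiv ℝ f x (Pi.single k 1)

/-- Shannon entropy `H(x) = −∑ₖ xₖ log xₖ`. -/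
noncomputable def shannonEntropy {d : ℕ} (x : Fin d → ℝ) : ℝ :=
  -∑ k, x k * Real.log (x k)

lemma convex_grad_ineq {E : Type*} [NormedAddCommGroup E] [NormedSpace ℝ E]
    {f : E → ℝ} (hf : ConvexOn ℝ Set.univ f) (x y : E) (hd : DifferentiableAt ℝ f x) :
    f x + fderiv ℝ f x (y - x) ≤ f y := by
  set φ : ℝ → ℝ := fun t => f (t • (y - x) + x) with hφ
  have hline : HasDerivAt (fun t : ℝ => t • (y - x) + x) (y - x) 0 := by
    simpa using ((hasDerivAt_id (0:ℝ)).smul_const (y - x)).add_const x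
  have h0 : (0:ℝ) • (y - x) + x = x := by simp
  have hder : HasDerivAt φ (fderiv ℝ f x (y - x)) 0 := by
    have hfd : HasFDerivAt f (fderiv ℝ f x) ((0:ℝ) • (y - x) + x) := by
      rw [h0]; exact hd.hasFDerivAt
    have := hfd.comp_hasDerivAt 0 hline
    exact this
  have hconv : ConvexOn ℝ Set.univ φ := by
    have := hf.comp_affineMap (AffineMap.lineMap x y : ℝ →ᵃ[ℝ] E)
    have heq : φ = f ∘ (AffineMap.lineMap x y : ℝ →ᵃ[ℝ] E) := by
      funext t
      show f _ = f _
      congr 1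
    rw [heq]
    simpa using this
  have := hconv.le_slope_of_hasDerivAt (Set.mem_univ (0:ℝ)) (Set.mem_univ 1)
    one_pos hder
  have hs : slope φ 0 1 = f y - f x := by
    simp [slope_def_field, hφ]
  rw [hs] at this
  linarith

lemma clm_apply_eq_sum {e : ℕ} (L : (Fin e → ℝ) →L[ℝ] ℝ) (v : Fin e → ℝ) :
    L v = ∑ j, v j * L (Pi.single j 1) := by
  have hv : v = ∑ j, v j • (Pi.single j 1 : Fin e → ℝ) := by
    funext i
    simp [Pi.single_apply]
  conv_lhs => rw [hv]
  rw [map_sum]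
  simp [smul_eq_mul]

lemma hasFDerivAt_shannon {e : ℕ} {x : Fin e → ℝ} (hx : ∀ j, x j ≠ 0) :
    HasFDerivAt (shannonEntropy (d := e))
      (-∑ j, (Real.log (x j) + 1) • (ContinuousLinearMap.proj j :
        (Fin e → ℝ) →L[ℝ] ℝ)) x := by
  have hsum : HasFDerivAt (fun z : Fin e → ℝ => ∑ j, z j * Real.log (z j))
      (∑ j, (Real.log (x j) + 1) • (ContinuousLinearMap.proj j :
        (Fin e → ℝ) →L[ℝ] ℝ)) x := by
    apply HasFDerivAt.fun_sum
    intro j _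
    exact (Real.hasDerivAt_mul_log (hx j)).comp_hasFDerivAt x
      (ContinuousLinearMap.proj j : (Fin e → ℝ) →L[ℝ] ℝ).hasFDerivAt
  exact hsum.neg

/-- Entropy is at most `log d` on the positive simplex. -/
lemma shannon_le_log {e : ℕ} {x : Fin e → ℝ} (hpos : ∀ j, 0 < x j)
    (hsum : ∑ j, x j = 1) : shannonEntropy x ≤ Real.log e := by
  have hcon : ConcaveOn ℝ (Set.Ioi (0:ℝ)) Real.log := strictConcaveOn_log_Ioi.concaveOn
  have hjen := hcon.le_map_sum (t := Finset.univ) (w := x) (p := fun j => (x j)⁻¹)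
    (fun j _ => (hpos j).le) hsum (fun j _ => by
      exact Set.mem_Ioi.mpr (inv_pos.mpr (hpos j)))
  have h1 : ∑ j, x j • Real.log ((x j)⁻¹) = shannonEntropy x := by
    unfold shannonEntropy
    rw [← Finset.sum_neg_distrib]
    refine Finset.sum_congr rfl fun j _ => ?_
    rw [Real.log_inv]
    simp only [smul_eq_mul]
    ring
  have h2 : ∑ j, x j • (x j)⁻¹ = (e : ℝ) := by
    have : ∀ j ∈ Finset.univ, x j • (x j)⁻¹ = (1:ℝ) := fun j _ => by
      simp [smul_eq_mul, mul_inv_cancel₀ (hpos j).ne']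
    rw [Finset.sum_congr rfl this]
    simp
  rw [h1, h2] at hjen
  exact hjen

set_option maxHeartbeats 1600000 in
/-- The projected-gradient loss `L^τ` bounds exploitability:
`max_k ε_k ≤ τ log(max_k d_k) + √(2 n L^τ)`. -/
theorem projected_gradient_loss_scores_nash
    {n : ℕ} (hn : 1 ≤ n) (d m' : Fin n → ℕ)
    (A : ∀ k, Matrix (Fin (m' k)) (Fin (d k)) ℝ)
    (hA : ∀ k, (A k).rank = m' k)
    (b : ∀ k, Fin (m' k) → ℝ)
    (hM : ∀ k, {x : Fin (d k) → ℝ | x ∈ stdSimplex ℝ (Fin (d k)) ∧ A k *ᵥ x = b k}.Nonempty)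
    (ℓ : ∀ _ : Fin n, ((k : Fin n) → (Fin (d k) → ℝ)) → ℝ)
    (hdiff : ∀ k, Differentiable ℝ (ℓ k))
    (hconv : ∀ k (x : (j : Fin n) → (Fin (d j) → ℝ)),
      ConvexOn ℝ Set.univ (fun z : Fin (d k) → ℝ => ℓ k (Function.update x k z)))
    (μ : (k : Fin n) → (Fin (d k) → ℝ))
    (hμ : ∀ k, μ k ∈ stdSimplex ℝ (Fin (d k)) ∧ A k *ᵥ μ k = b k)
    (hμpos : ∀ k j, 0 < μ k j)
    (τ : ℝ) (hτ : 0 < τ) :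
    ∀ k : Fin n,
      ℓ k μ -
          sInf ((fun z : Fin (d k) → ℝ => ℓ k (Function.update μ k z)) ''
            {x : Fin (d k) → ℝ | x ∈ stdSimplex ℝ (Fin (d k)) ∧ A k *ᵥ x = b k}) ≤
        τ * Real.log ((Finset.univ.sup d : ℕ) : ℝ) +
          Real.sqrt (2 * n *
            (∑ k : Fin n, ∑ j,
              (projMat (A k) *ᵥ
                grad (fun z : Fin (d k) → ℝ =>
                  ℓ k (Function.update μ k z) - τ * shannonEntropy z) (μ k)) j ^ 2)) := by
  intro k
  obtain ⟨⟨hxnn, hxsum⟩, hxb⟩ := hμ k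
  have hxpos : ∀ j, 0 < μ k j := hμpos k
  set e := d k with he_def
  set x : Fin e → ℝ := μ k with hx_def
  set Lval : ℝ := ∑ k : Fin n, ∑ j,
      (projMat (A k) *ᵥ
        grad (fun z : Fin (d k) → ℝ =>
          ℓ k (Function.update μ k z) - τ * shannonEntropy z) (μ k)) j ^ 2 with hLval
  -- basic positivity facts
  have he : 0 < e := by
    rcases Nat.eq_zero_or_pos e with h | h
    · exfalso
      have : IsEmpty (Fin e) := by rw [h]; infer_instance
      rw [Finset.univ_eq_empty, Finset.sum_empty] at hxsum
      exact one_ne_zero hxsum.symm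
    · exact h
  have hsupd : (e : ℝ) ≤ ((Finset.univ.sup d : ℕ) : ℝ) := by
    exact_mod_cast Finset.le_sup (f := d) (Finset.mem_univ k)
  have hxle1 : ∀ j, x j ≤ 1 := by
    intro j
    calc x j ≤ ∑ i, x i := Finset.single_le_sum (fun i _ => hxnn i) (Finset.mem_univ j)
    _ = 1 := hxsum
  -- the function f
  set f : (Fin e → ℝ) → ℝ := fun z => ℓ k (Function.update μ k z) with hf_def
  have hupd : Differentiable ℝ (fun z : Fin e → ℝ => Function.update μ k z) :=
    fun z => (hasFDerivAt_update μ z).differentiableAt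
  have hfd : Differentiable ℝ f := (hdiff k).comp hupd
  -- gradient of the entropic part
  set LH : (Fin e → ℝ) →L[ℝ] ℝ :=
    -∑ j, (Real.log (x j) + 1) • (ContinuousLinearMap.proj j :
      (Fin e → ℝ) →L[ℝ] ℝ) with hLH
  have hH : HasFDerivAt (shannonEntropy (d := e)) LH x :=
    hasFDerivAt_shannon (fun j => (hxpos j).ne')
  have hcomb : HasFDerivAt (fun z => f z - τ * shannonEntropy z)
      (fderiv ℝ f x - τ • LH) x := by
    have := (hfd x).hasFDerivAt.sub (hH.const_smul τ)
    exact this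
  set v : Fin e → ℝ := grad (fun z : Fin e → ℝ =>
      ℓ k (Function.update μ k z) - τ * shannonEntropy z) x with hv_def
  have hLHj : ∀ j, LH (Pi.single j 1) = -(Real.log (x j) + 1) := by
    intro j
    rw [hLH]
    simp only [ContinuousLinearMap.neg_apply, ContinuousLinearMap.sum_apply,
      ContinuousLinearMap.smul_apply, ContinuousLinearMap.proj_apply, smul_eq_mul]
    rw [Finset.sum_eq_single j]
    · simp
    · intro i _ hij
      simp [Pi.single_apply, hij.symm]
    · intro h
      exact absurd (Finset.mem_univ j) h
  have hvj : ∀ j, fderiv ℝ f x (Pi.single j 1) = v j - τ * (Real.log (x j) + 1) := by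
    intro j
    have h1 : v j = (fderiv ℝ f x - τ • LH) (Pi.single j 1) := by
      rw [hv_def]
      show fderiv ℝ (fun z : Fin e → ℝ =>
        ℓ k (Function.update μ k z) - τ * shannonEntropy z) x (Pi.single j 1) = _
      rw [show (fun z : Fin e → ℝ => ℓ k (Function.update μ k z) - τ * shannonEntropy z)
        = (fun z => f z - τ * shannonEntropy z) from rfl, hcomb.fderiv]
    rw [h1]
    simp only [ContinuousLinearMap.sub_apply, ContinuousLinearMap.smul_apply, smul_eq_mul,
      hLHj j]
    ring
  -- projection facts
  set P := projMat (A k) with hP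
  have hPsymm : Pᵀ = P := by
    rw [hP]
    unfold projMat
    rw [transpose_sub, transpose_one, transpose_mul, transpose_mul, transpose_transpose,
      transpose_nonsing_inv]
    congr 1
    rw [← Matrix.mul_assoc]
    congr 2
    rw [transpose_mul, transpose_transpose]
  have hPfix : ∀ z : Fin e → ℝ, A k *ᵥ z = b k → P *ᵥ (x - z) = x - z := by
    intro z hz
    rw [hP]
    unfold projMat
    rw [sub_mulVec, Matrix.one_mulVec]
    have h0 : A k *ᵥ (x - z) = 0 := by
      rw [Matrix.mulVec_sub, hxb, hz, sub_self]
    have h9 : ((A k)ᵀ * (A k * (A k)ᵀ)⁻¹ * A k) *ᵥ (x - z) = 0 := by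
      rw [Matrix.mul_assoc, ← Matrix.mulVec_mulVec, ← Matrix.mulVec_mulVec, h0,
        Matrix.mulVec_zero, Matrix.mulVec_zero]
    rw [h9, sub_zero]
  -- entropy bound
  have hent : shannonEntropy x ≤ Real.log ((Finset.univ.sup d : ℕ) : ℝ) := by
    calc shannonEntropy x ≤ Real.log e := shannon_le_log hxpos hxsum
    _ ≤ _ := Real.log_le_log (by exact_mod_cast he) hsupd
  -- the k-th summand of Lval
  have hLk : ∑ j, (P *ᵥ v) j ^ 2 ≤ Lval := by
    rw [hLval]
    have : ∑ j, (P *ᵥ v) j ^ 2 = ∑ j,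
        (projMat (A k) *ᵥ
          grad (fun z : Fin (d k) → ℝ =>
            ℓ k (Function.update μ k z) - τ * shannonEntropy z) (μ k)) j ^ 2 := rfl
    rw [this]
    exact Finset.single_le_sum
      (f := fun k : Fin n => ∑ j,
        (projMat (A k) *ᵥ
          grad (fun z : Fin (d k) → ℝ =>
            ℓ k (Function.update μ k z) - τ * shannonEntropy z) (μ k)) j ^ 2)
      (fun i _ => Finset.sum_nonneg fun j _ => sq_nonneg _) (Finset.mem_univ k)
  have hLval0 : 0 ≤ Lval :=
    le_trans (Finset.sum_nonneg fun j _ => sq_nonneg _) hLk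
  -- main bound for each feasible z
  have hmain : ∀ z : Fin e → ℝ,
      z ∈ stdSimplex ℝ (Fin e) → A k *ᵥ z = b k →
      f x - f z ≤ τ * Real.log ((Finset.univ.sup d : ℕ) : ℝ) +
        Real.sqrt (2 * n * Lval) := by
    intro z hzs hzb
    obtain ⟨hznn, hzsum⟩ := hzs
    -- convexity gradient inequality
    have hgi := convex_grad_ineq (hconv k μ) x z (hfd x)
    have h1 : f x - f z ≤ fderiv ℝ f x (x - z) := by
      have : fderiv ℝ f x (x - z) = -(fderiv ℝ f x (z - x)) := by
        rw [← map_neg, neg_sub]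
      rw [this]
      have hgi' : f x + fderiv ℝ f x (z - x) ≤ f z := hgi
      linarith
    have h2 : fderiv ℝ f x (x - z) = ∑ j, (x j - z j) * v j -
        τ * ∑ j, (x j - z j) * (Real.log (x j) + 1) := by
      rw [clm_apply_eq_sum, Finset.mul_sum, ← Finset.sum_sub_distrib]
      refine Finset.sum_congr rfl fun j _ => ?_
      rw [hvj j]
      simp only [Pi.sub_apply]
      ring
    -- bound the entropic term
    have h3 : - (τ * ∑ j, (x j - z j) * (Real.log (x j) + 1)) ≤
        τ * Real.log ((Finset.univ.sup d : ℕ) : ℝ) := by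
      have hexp : ∑ j, (x j - z j) * (Real.log (x j) + 1) =
          (∑ j, x j * Real.log (x j)) - (∑ j, z j * Real.log (x j)) := by
        have : ∀ j ∈ Finset.univ, (x j - z j) * (Real.log (x j) + 1) =
            (x j * Real.log (x j) - z j * Real.log (x j)) + (x j - z j) := fun j _ => by ring
        rw [Finset.sum_congr rfl this, Finset.sum_add_distrib, Finset.sum_sub_distrib,
          Finset.sum_sub_distrib, hxsum, hzsum]
        ring
      have hzlog : ∑ j, z j * Real.log (x j) ≤ 0 :=
        Finset.sum_nonpos fun j _ => mul_nonpos_of_nonneg_of_nonpos (hznn j)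
          (Real.log_nonpos (hxpos j).le (hxle1 j))
      have hHx : -(∑ j, x j * Real.log (x j)) = shannonEntropy x := by
        unfold shannonEntropy; ring_nf
      rw [hexp]
      have : -((∑ j, x j * Real.log (x j)) - (∑ j, z j * Real.log (x j))) ≤
          shannonEntropy x := by
        rw [← hHx]; linarith
      calc -(τ * ((∑ j, x j * Real.log (x j)) - (∑ j, z j * Real.log (x j))))
          = τ * (-((∑ j, x j * Real.log (x j)) - (∑ j, z j * Real.log (x j)))) := by ring
        _ ≤ τ * shannonEntropy x := by
            exact mul_le_mul_of_nonneg_left this hτ.le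
        _ ≤ τ * Real.log ((Finset.univ.sup d : ℕ) : ℝ) :=
            mul_le_mul_of_nonneg_left hent hτ.le
    -- bound the projected term via Cauchy–Schwarz
    have h4 : ∑ j, (x j - z j) * v j ≤ Real.sqrt (2 * n * Lval) := by
      have hdot : ∑ j, (x j - z j) * v j = ∑ j, (P *ᵥ v) j * (x j - z j) := by
        have h5 : ∑ j, (x j - z j) * v j = (x - z) ⬝ᵥ v := by
          unfold dotProduct
          refine Finset.sum_congr rfl fun j _ => ?_
          simp [Pi.sub_apply]
        have h6 : (x - z) ⬝ᵥ v = (P *ᵥ (x - z)) ⬝ᵥ v := by rw [hPfix z hzb]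
        have h7 : (P *ᵥ (x - z)) ⬝ᵥ v = (P *ᵥ v) ⬝ᵥ (x - z) := by
          rw [dotProduct_comm, Matrix.dotProduct_mulVec, ← Matrix.mulVec_transpose,
            hPsymm]
        rw [h5, h6, h7]
        unfold dotProduct
        refine Finset.sum_congr rfl fun j _ => ?_
        simp [Pi.sub_apply]
      rw [hdot]
      have hw2 : ∑ j, (x j - z j) ^ 2 ≤ 2 := by
        have hle : ∀ j ∈ Finset.univ, (x j - z j) ^ 2 ≤ x j + z j := by
          intro j _
          have hz1 : z j ≤ 1 := by
            rw [← hzsum]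
            exact Finset.single_le_sum (fun i _ => hznn i) (Finset.mem_univ j)
          nlinarith [hxpos j, hznn j, hxle1 j]
        have hsum2 : ∑ j, (x j + z j) = 2 := by
          rw [Finset.sum_add_distrib, hxsum, hzsum]; norm_num
        rw [← hsum2]
        exact Finset.sum_le_sum hle
      have hcs := Finset.sum_mul_sq_le_sq_mul_sq Finset.univ
        (fun j => (P *ᵥ v) j) (fun j => x j - z j)
      have hPv0 : 0 ≤ ∑ j, (P *ᵥ v) j ^ 2 := Finset.sum_nonneg fun j _ => sq_nonneg _
      have hsq : (∑ j, (P *ᵥ v) j * (x j - z j)) ^ 2 ≤ 2 * n * Lval := by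
        calc (∑ j, (P *ᵥ v) j * (x j - z j)) ^ 2
            ≤ (∑ j, (P *ᵥ v) j ^ 2) * (∑ j, (x j - z j) ^ 2) := hcs
          _ ≤ (∑ j, (P *ᵥ v) j ^ 2) * 2 := by
              exact mul_le_mul_of_nonneg_left hw2 hPv0
          _ ≤ Lval * 2 := by exact mul_le_mul_of_nonneg_right hLk (by norm_num)
          _ ≤ 2 * n * Lval := by
              have hn1 : (1 : ℝ) ≤ (n : ℝ) := by exact_mod_cast hn
              nlinarith [hLval0]
      have habs : ∑ j, (P *ᵥ v) j * (x j - z j) ≤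
          Real.sqrt ((∑ j, (P *ᵥ v) j * (x j - z j)) ^ 2) := by
        rw [Real.sqrt_sq_eq_abs]
        exact le_abs_self _
      exact le_trans habs (Real.sqrt_le_sqrt hsq)
    rw [h2] at h1
    linarith [h3, h4]
  -- conclude via sInf
  have himg : (f ''
      {x : Fin e → ℝ | x ∈ stdSimplex ℝ (Fin e) ∧ A k *ᵥ x = b k}).Nonempty :=
    (hM k).image _
  have hlb : ℓ k μ - (τ * Real.log ((Finset.univ.sup d : ℕ) : ℝ) +
      Real.sqrt (2 * n * Lval)) ≤ sInf (f ''
      {x : Fin e → ℝ | x ∈ stdSimplex ℝ (Fin e) ∧ A k *ᵥ x = b k}) := by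
    apply le_csInf himg
    rintro y ⟨z, ⟨hzs, hzb⟩, rfl⟩
    have hμeq : ℓ k μ = f x := by
      show ℓ k μ = ℓ k (Function.update μ k (μ k))
      rw [Function.update_eq_self]
    have hm := hmain z hzs hzb
    linarith
  have hfinal : ℓ k μ - sInf (f ''
      {x : Fin e → ℝ | x ∈ stdSimplex ℝ (Fin e) ∧ A k *ᵥ x = b k}) ≤
      τ * Real.log ((Finset.univ.sup d : ℕ) : ℝ) + Real.sqrt (2 * n * Lval) := by
    linarith
  exact hfinal
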